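/- Let V be a finite index set, W₀ an n×n symmetric positive definite matrix, and for each v ∈ V let W_v be symmetric positive semidefinite. Define W_S = W₀ + Σ_{s∈S} W_s and f(S) = log det(W_S). Then f is submodular: for all A ⊆ B ⊆ V and a ∈ V \ B, f(A ∪ {a}) − f(A) ≥ f(B ∪ {a}) − f(B). -/

import Mathlib

open Matrix

section Helpers

variable {m : Type*} [Fintype m] [DecidableEq m]

open scoped MatrixOrder

private lemma one_le_det_one_add {E : Matrix m m ℝ} (hE : E.PosSemidef) :
    (1 : ℝ) ≤ (1 + E).det := by
  have hH := hE.isHermitian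
  set U : Matrix m m ℝ := (hH.eigenvectorUnitary : Matrix m m ℝ) with hUdef
  have hU : U * star U = 1 := mem_unitaryGroup_iff.mp hH.eigenvectorUnitary.2
  set v : m → ℝ := RCLike.ofReal ∘ hH.eigenvalues with hvdef
  have h1 : 1 + E = U * (1 + diagonal v) * star U := by
    rw [mul_add, mul_one, add_mul, hU]
    congr 1
    exact hH.spectral_theorem
  have hUdet : U.det * (star U).det = 1 := by rw [← det_mul, hU, det_one]
  have h2 : (1 + E).det = (1 + diagonal v).det := by
    rw [h1, det_mul, det_mul, mul_right_comm, hUdet, one_mul]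
  have h3 : (1 + diagonal v).det = ∏ i, (1 + v i) := by
    rw [← diagonal_one, diagonal_add, det_diagonal]
  rw [h2, h3]
  have h4 : (1 : ℝ) = ∏ _i : m, (1 : ℝ) := by simp
  rw [h4]
  apply Finset.prod_le_prod
  · intro i _; norm_num
  · intro i _
    have := hE.eigenvalues_nonneg i
    simp only [hvdef, Function.comp_apply, RCLike.ofReal_real_eq_id, id_eq]
    linarith

private lemma det_le_det_add {A D : Matrix m m ℝ} (hA : A.PosDef) (hD : D.PosSemidef) :
    A.det ≤ (A + D).det := by
  set S := CFC.sqrt A with hSdef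
  have hSS : S * S = A := CFC.sqrt_mul_sqrt_self A hA.posSemidef.nonneg
  have hAdet := hA.det_pos
  have hSdet : IsUnit S.det := by
    refine isUnit_iff_ne_zero.mpr fun h => ?_
    have : S.det * S.det = A.det := by rw [← det_mul, hSS]
    rw [h, mul_zero] at this
    linarith
  have hSH : Sᴴ = S := (CFC.sqrt_nonneg A).posSemidef.isHermitian
  have hSinvH : (S⁻¹)ᴴ = S⁻¹ := by rw [conjTranspose_nonsing_inv, hSH]
  have hE : (S⁻¹ * D * S⁻¹).PosSemidef := by
    have := hD.mul_mul_conjTranspose_same S⁻¹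
    rwa [hSinvH] at this
  have key : A + D = S * (1 + S⁻¹ * D * S⁻¹) * S := by
    rw [mul_add, mul_one, add_mul, hSS]
    congr 1
    simp only [← mul_assoc]
    rw [mul_nonsing_inv _ hSdet, one_mul, mul_assoc, nonsing_inv_mul _ hSdet, mul_one]
  have h1 := one_le_det_one_add hE
  have hcalc : (A + D).det = A.det * (1 + S⁻¹ * D * S⁻¹).det := by
    rw [key, det_mul, det_mul, mul_right_comm, ← det_mul, hSS]
  rw [hcalc]
  nlinarith

private lemma inv_sub_inv_psd {M P : Matrix m m ℝ} (hM : M.PosDef) (hP : P.PosSemidef) :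
    (M⁻¹ - (M + P)⁻¹).PosSemidef := by
  set S := CFC.sqrt M with hSdef
  have hSS : S * S = M := CFC.sqrt_mul_sqrt_self M hM.posSemidef.nonneg
  have hMdet := hM.det_pos
  have hSdet : IsUnit S.det := by
    refine isUnit_iff_ne_zero.mpr fun h => ?_
    have : S.det * S.det = M.det := by rw [← det_mul, hSS]
    rw [h, mul_zero] at this
    linarith
  have hSH : Sᴴ = S := (CFC.sqrt_nonneg M).posSemidef.isHermitian
  have hSinvH : (S⁻¹)ᴴ = S⁻¹ := by rw [conjTranspose_nonsing_inv, hSH]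
  set E := S⁻¹ * P * S⁻¹ with hEdef
  have hE : E.PosSemidef := by
    have := hP.mul_mul_conjTranspose_same S⁻¹
    rwa [hSinvH] at this
  have h1E : (1 + E).PosDef := Matrix.PosDef.one.add_posSemidef hE
  have h1Edet : IsUnit (1 + E).det := isUnit_iff_ne_zero.mpr (ne_of_gt h1E.det_pos)
  have h1EH : ((1 + E)⁻¹)ᴴ = (1 + E)⁻¹ := by
    rw [conjTranspose_nonsing_inv, h1E.isHermitian]
  have key : M + P = S * (1 + E) * S := by
    rw [mul_add, mul_one, add_mul, hSS, hEdef]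
    congr 1
    simp only [← mul_assoc]
    rw [mul_nonsing_inv _ hSdet, one_mul, mul_assoc, nonsing_inv_mul _ hSdet, mul_one]
  have hMPinv : (M + P)⁻¹ = S⁻¹ * (1 + E)⁻¹ * S⁻¹ := by
    rw [key, Matrix.mul_inv_rev, Matrix.mul_inv_rev, mul_assoc]
  have hMinv : M⁻¹ = S⁻¹ * 1 * S⁻¹ := by
    rw [← hSS, Matrix.mul_inv_rev, mul_one]
  have hfact : M⁻¹ - (M + P)⁻¹ = S⁻¹ * (1 - (1 + E)⁻¹) * S⁻¹ := by
    rw [hMinv, hMPinv, mul_sub, sub_mul]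
  have hmid : 1 - (1 + E)⁻¹ = (1 + E)⁻¹ * (E + E * E) * (1 + E)⁻¹ :=
    calc 1 - (1 + E)⁻¹ = (1 + E)⁻¹ * (1 + E) - (1 + E)⁻¹ * 1 := by
          rw [nonsing_inv_mul _ h1Edet, mul_one]
      _ = (1 + E)⁻¹ * E := by rw [← mul_sub, add_sub_cancel_left]
      _ = (1 + E)⁻¹ * E * ((1 + E) * (1 + E)⁻¹) := by
          rw [mul_nonsing_inv _ h1Edet, mul_one]
      _ = (1 + E)⁻¹ * (E + E * E) * (1 + E)⁻¹ := by noncomm_ring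
  have hEE : (E * E).PosSemidef := by
    have := posSemidef_conjTranspose_mul_self E
    rwa [hE.isHermitian] at this
  have hsum := hE.add hEE
  have h1 : ((1 + E)⁻¹ * (E + E * E) * (1 + E)⁻¹).PosSemidef := by
    have := hsum.mul_mul_conjTranspose_same (1 + E)⁻¹
    rwa [h1EH] at this
  rw [hfact, hmid]
  have := h1.mul_mul_conjTranspose_same S⁻¹
  rwa [hSinvH] at this

/-- The key determinant inequality. -/
private lemma det_submodular {M P Q : Matrix m m ℝ}
    (hM : M.PosDef) (hP : P.PosSemidef) (hQ : Q.PosSemidef) :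
    (M + P + Q).det * M.det ≤ (M + P).det * (M + Q).det := by
  set C := CFC.sqrt Q with hCdef
  have hCC : C * C = Q := CFC.sqrt_mul_sqrt_self Q hQ.nonneg
  have hCH : Cᴴ = C := (CFC.sqrt_nonneg Q).posSemidef.isHermitian
  have hMP : (M + P).PosDef := hM.add_posSemidef hP
  have hMPdet : IsUnit (M + P).det := isUnit_iff_ne_zero.mpr (ne_of_gt hMP.det_pos)
  have hMdet : IsUnit M.det := isUnit_iff_ne_zero.mpr (ne_of_gt hM.det_pos)
  -- factor det (M + P + Q)
  have fact1 : ∀ (N : Matrix m m ℝ), IsUnit N.det →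
      (N + Q).det = N.det * (1 + C * N⁻¹ * C).det := by
    intro N hN
    have h1 : N + Q = N * (1 + N⁻¹ * C * C) := by
      rw [mul_add, mul_one, ← mul_assoc, ← mul_assoc, mul_nonsing_inv _ hN, one_mul, hCC]
    rw [h1, det_mul]
    congr 1
    rw [det_one_add_mul_comm (N⁻¹ * C) C, ← mul_assoc]
  have e1 := fact1 (M + P) hMPdet
  have e2 := fact1 M hMdet
  -- compare the two correction factors
  have hXpsd : (C * (M + P)⁻¹ * C).PosSemidef := by
    have := (hMP.inv).posSemidef.mul_mul_conjTranspose_same C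
    rwa [hCH] at this
  have hX : (1 + C * (M + P)⁻¹ * C).PosDef := Matrix.PosDef.one.add_posSemidef hXpsd
  have hDpsd : (C * (M⁻¹ - (M + P)⁻¹) * C).PosSemidef := by
    have := (inv_sub_inv_psd hM hP).mul_mul_conjTranspose_same C
    rwa [hCH] at this
  have hsum : 1 + C * (M + P)⁻¹ * C + C * (M⁻¹ - (M + P)⁻¹) * C = 1 + C * M⁻¹ * C := by
    noncomm_ring
  have hdetle : (1 + C * (M + P)⁻¹ * C).det ≤ (1 + C * M⁻¹ * C).det := by
    have := det_le_det_add hX hDpsd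
    rwa [hsum] at this
  have hXpos : 0 < (1 + C * (M + P)⁻¹ * C).det := hX.det_pos
  calc (M + P + Q).det * M.det = (M + P).det * (1 + C * (M + P)⁻¹ * C).det * M.det := by
        rw [e1]
    _ ≤ (M + P).det * (1 + C * M⁻¹ * C).det * M.det :=
        mul_le_mul_of_nonneg_right
          (mul_le_mul_of_nonneg_left hdetle hMP.det_pos.le) hM.det_pos.le
    _ = (M + P).det * (M + Q).det := by rw [e2]; ring

end Helpers

/-- With `W₀ ≻ 0` and each `W v ⪰ 0`, the set function
`f S = log det (W₀ + ∑ s ∈ S, W s)` is submodular. -/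
theorem log_det_gramian_submodular {V : Type*} [Fintype V] [DecidableEq V] {n : ℕ}
    (W₀ : Matrix (Fin n) (Fin n) ℝ) (hW₀ : W₀.PosDef)
    (W : V → Matrix (Fin n) (Fin n) ℝ) (hW : ∀ v, (W v).PosSemidef)
    (f : Finset V → ℝ)
    (hf : ∀ S : Finset V, f S = Real.log (W₀ + ∑ s ∈ S, W s).det) :
    ∀ A B : Finset V, A ⊆ B → ∀ a ∉ B,
      f (insert a B) - f B ≤ f (insert a A) - f A := by
  intro A B hAB a haB
  have haA : a ∉ A := fun h => haB (hAB h)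
  have hsum : ∀ S : Finset V, (∑ s ∈ S, W s).PosSemidef := fun S =>
    Finset.sum_induction _ _ (fun _ _ hx hy => hx.add hy) Matrix.PosSemidef.zero
      (fun i _ => hW i)
  set M : Matrix (Fin n) (Fin n) ℝ := W₀ + ∑ s ∈ A, W s with hMdef
  set P : Matrix (Fin n) (Fin n) ℝ := ∑ s ∈ B \ A, W s with hPdef
  have hM : M.PosDef := hW₀.add_posSemidef (hsum A)
  have hP : P.PosSemidef := hsum (B \ A)
  have hQ : (W a).PosSemidef := hW a
  have hB : W₀ + ∑ s ∈ B, W s = M + P := by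
    rw [← Finset.sum_sdiff hAB, hMdef, hPdef]; abel
  have hiA : W₀ + ∑ s ∈ insert a A, W s = M + W a := by
    rw [Finset.sum_insert haA, hMdef]; abel
  have hiB : W₀ + ∑ s ∈ insert a B, W s = M + P + W a := by
    rw [Finset.sum_insert haB, ← Finset.sum_sdiff hAB, hMdef, hPdef]; abel
  have key := det_submodular hM hP hQ
  have p1 : 0 < M.det := hM.det_pos
  have p2 : 0 < (M + P).det := (hM.add_posSemidef hP).det_pos
  have p3 : 0 < (M + W a).det := (hM.add_posSemidef hQ).det_pos
  have p4 : 0 < (M + P + W a).det := ((hM.add_posSemidef hP).add_posSemidef hQ).det_pos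
  have hlog := Real.log_le_log (by positivity) key
  rw [Real.log_mul (ne_of_gt p4) (ne_of_gt p1),
    Real.log_mul (ne_of_gt p2) (ne_of_gt p3)] at hlog
  rw [hf, hf, hf, hf, hiB, hiA, hB]
  linarith
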